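/- Let δ_1, δ_2 ∈ ℝ∪{∞} with δ_1 − δ_2 ∈ Γ_v, and let c ∈ K with v(c) = δ_1 − δ_2. Then the map Ψ_c : 𝒱(•,δ_2) → 𝒱(•,δ_1), V_E ↦ V_{cE} (where cE = {c·s_n} for E = {s_n}), is a well-defined bijection satisfying d_{δ_1}(Ψ_c(V_E), Ψ_c(V_F)) = e^{−v(c)} · d_{δ_2}(V_E, V_F) for all V_E, V_F ∈ 𝒱(•,δ_2); in particular, the metric spaces (𝒱(•,δ_1), d_{δ_1}) and (𝒱(•,δ_2), d_{δ_2}) are similar, and 𝒱(•,δ_1) and 𝒱(•,δ_2) are homeomorphic when endowed with the Zariski topology. -/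

import Mathlib

open Filter Topology TopologicalSpace Set Polynomial

noncomputable section

namespace PaperPCZar

variable {K : Type*} [Field K]

/-- `expNeg γ = e^{-γ}` for `γ ∈ ℝ ∪ {∞}`, with `e^{-∞} = 0`. -/
def expNeg (γ : WithTop ℝ) : ℝ := WithTop.recTopCoe 0 (fun r => Real.exp (-r)) γ

/-- `v` is a rank-one (i.e. nontrivial, real-valued) valuation. -/
def IsRankOne (v : AddValuation K (WithTop ℝ)) : Prop := ∃ x : K, v x ≠ 0 ∧ v x ≠ ⊤

/-- The value group `Γ_v` of `v`, as a subset of `ℝ`. -/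
def valueGroup (v : AddValuation K (WithTop ℝ)) : Set ℝ := {r : ℝ | ∃ x : K, v x = (r : WithTop ℝ)}

/-- `ℚΓ_v = {q·γ : q ∈ ℚ, γ ∈ Γ_v}`, the divisible hull of the value group inside `ℝ`. -/
def QGamma (v : AddValuation K (WithTop ℝ)) : Set ℝ :=
  {r : ℝ | ∃ (q : ℚ) (γ : ℝ), γ ∈ valueGroup v ∧ r = q * γ}

/-- Order convergence of a sequence in `ℝ ∪ {∞}` to `γ`. -/
def OrdLim (f : ℕ → WithTop ℝ) (γ : WithTop ℝ) : Prop :=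
  (∀ a : WithTop ℝ, a < γ → ∀ᶠ n in atTop, a < f n) ∧
  (∀ b : WithTop ℝ, γ < b → ∀ᶠ n in atTop, f n < b)

/-- `s` is a pseudo-convergent sequence with respect to `v`. -/
def IsPC (v : AddValuation K (WithTop ℝ)) (s : ℕ → K) : Prop :=
  ∀ n, v (s (n + 1) - s n) < v (s (n + 2) - s (n + 1))

/-- `s` is a pseudo-divergent sequence with respect to `v`. -/
def IsPD (v : AddValuation K (WithTop ℝ)) (s : ℕ → K) : Prop :=
  ∀ n, v (s (n + 1) - s (n + 2)) < v (s n - s (n + 1))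

/-- `s` is a pseudo-stationary sequence with respect to `v`. -/
def IsPS (v : AddValuation K (WithTop ℝ)) (s : ℕ → K) : Prop :=
  ∀ n m n' m' : ℕ, n ≠ m → n' ≠ m' → v (s n - s m) = v (s n' - s m')

/-- `δ ∈ ℝ ∪ {∞}` is the breadth of the sequence `s`, i.e. `δ = lim_n v(s_{n+1} - s_n)`. -/
def IsBreadth (v : AddValuation K (WithTop ℝ)) (s : ℕ → K) (δ : WithTop ℝ) : Prop :=
  OrdLim (fun n => v (s (n + 1) - s n)) δ

/-- `α ∈ K` is a pseudo-limit of the pseudo-convergent sequence `s`. -/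
def IsPCLimit (v : AddValuation K (WithTop ℝ)) (s : ℕ → K) (α : K) : Prop :=
  ∀ n, v (α - s n) < v (α - s (n + 1))

/-- `α ∈ K` is a pseudo-limit of the pseudo-divergent sequence `s`. -/
def IsPDLimit (v : AddValuation K (WithTop ℝ)) (s : ℕ → K) (α : K) : Prop :=
  ∀ n, v (α - s (n + 1)) < v (α - s n)

/-- `β ∈ K̄` is a pseudo-limit of `s ⊆ K` with respect to an extension `u` of `v`
to the algebraic closure of `K`. -/
def IsPCLimitAC (u : AddValuation (AlgebraicClosure K) (WithTop ℝ)) (s : ℕ → K)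
    (β : AlgebraicClosure K) : Prop :=
  ∀ n, u (β - algebraMap K (AlgebraicClosure K) (s n)) <
    u (β - algebraMap K (AlgebraicClosure K) (s (n + 1)))

/-- `s` is of transcendental type: for every polynomial `f`, `v(f(s_n))` eventually
stabilizes. -/
def IsTranscendentalType (v : AddValuation K (WithTop ℝ)) (s : ℕ → K) : Prop :=
  ∀ f : Polynomial K, ∃ N, ∀ n ≥ N, v (f.eval (s n)) = v (f.eval (s N))

/-- The ultrametric distance `d(x,y) = e^{-v(x-y)}` on `K`. -/
def dK (v : AddValuation K (WithTop ℝ)) (x y : K) : ℝ := expNeg (v (x - y))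

/-- The set `V_E = {φ ∈ K(X) : φ(s_n) ∈ V for all but finitely many n}`. -/
def VESet (v : AddValuation K (WithTop ℝ)) (s : ℕ → K) : Set (RatFunc K) :=
  {φ : RatFunc K | ∀ᶠ n in atTop, 0 ≤ v (RatFunc.eval (RingHom.id K) (s n) φ)}

/-- `Zar(K(X)|V)`: the valuation subrings of `K(X)` containing (the image of) `V`. -/
def ZarSet (v : AddValuation K (WithTop ℝ)) : Set (ValuationSubring (RatFunc K)) :=
  {W | ∀ x : K, 0 ≤ v x → algebraMap K (RatFunc K) x ∈ W}

/-- `𝒱`: valuation subrings of `K(X)` of the form `V_E`, `E` pseudo-convergent. -/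
def VV (v : AddValuation K (WithTop ℝ)) : Set (ValuationSubring (RatFunc K)) :=
  {W | ∃ s : ℕ → K, IsPC v s ∧ (W : Set (RatFunc K)) = VESet v s}

/-- `𝒱(•,δ)`: those `V_E` with `E` pseudo-convergent of breadth `δ`. -/
def VVδ (v : AddValuation K (WithTop ℝ)) (δ : WithTop ℝ) : Set (ValuationSubring (RatFunc K)) :=
  {W | ∃ s : ℕ → K, IsPC v s ∧ IsBreadth v s δ ∧ (W : Set (RatFunc K)) = VESet v s}

/-- `𝒱_K(•,δ)`: those `V_E` with `E` pseudo-convergent of breadth `δ` having a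
pseudo-limit in `K`. -/
def VVKδ (v : AddValuation K (WithTop ℝ)) (δ : WithTop ℝ) : Set (ValuationSubring (RatFunc K)) :=
  {W | ∃ s : ℕ → K, IsPC v s ∧ IsBreadth v s δ ∧ (∃ α : K, IsPCLimit v s α) ∧
    (W : Set (RatFunc K)) = VESet v s}

/-- `𝒱(β,•)`: those `V_E` with `E` pseudo-convergent having `β ∈ K̄` as a pseudo-limit
with respect to `u`. -/
def VVβ (v : AddValuation K (WithTop ℝ)) (u : AddValuation (AlgebraicClosure K) (WithTop ℝ))
    (β : AlgebraicClosure K) : Set (ValuationSubring (RatFunc K)) :=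
  {W | ∃ s : ℕ → K, IsPC v s ∧ IsPCLimitAC u s β ∧ (W : Set (RatFunc K)) = VESet v s}

/-- `𝒱(β,•)` for a pseudo-limit `β ∈ K`. -/
def VVβK (v : AddValuation K (WithTop ℝ)) (β : K) : Set (ValuationSubring (RatFunc K)) :=
  {W | ∃ s : ℕ → K, IsPC v s ∧ IsPCLimit v s β ∧ (W : Set (RatFunc K)) = VESet v s}

/-- `𝒱_div`: those `V_E` with `E` pseudo-divergent. -/
def VVdiv (v : AddValuation K (WithTop ℝ)) : Set (ValuationSubring (RatFunc K)) :=
  {W | ∃ s : ℕ → K, IsPD v s ∧ (W : Set (RatFunc K)) = VESet v s}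

/-- `𝒱_div(•,δ)`: those `V_E` with `E` pseudo-divergent of breadth `δ`. -/
def VVdivδ (v : AddValuation K (WithTop ℝ)) (δ : WithTop ℝ) : Set (ValuationSubring (RatFunc K)) :=
  {W | ∃ s : ℕ → K, IsPD v s ∧ IsBreadth v s δ ∧ (W : Set (RatFunc K)) = VESet v s}

/-- `𝒱_div(β,•)`: those `V_E` with `E` pseudo-divergent having `β ∈ K` as a pseudo-limit. -/
def VVdivβ (v : AddValuation K (WithTop ℝ)) (β : K) : Set (ValuationSubring (RatFunc K)) :=
  {W | ∃ s : ℕ → K, IsPD v s ∧ IsPDLimit v s β ∧ (W : Set (RatFunc K)) = VESet v s}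

/-- `𝒱_stat(•,δ)`: those `V_E` with `E` pseudo-stationary of breadth `δ`. -/
def VVstatδ (v : AddValuation K (WithTop ℝ)) (δ : WithTop ℝ) :
    Set (ValuationSubring (RatFunc K)) :=
  {W | ∃ s : ℕ → K, (∀ n m : ℕ, n ≠ m → v (s n - s m) = δ) ∧
    (W : Set (RatFunc K)) = VESet v s}

/-- `𝒱_stat(β,•)`: those `V_E` with `E` pseudo-stationary having `β` as a pseudo-limit. -/
def VVstatβ (v : AddValuation K (WithTop ℝ)) (β : K) : Set (ValuationSubring (RatFunc K)) :=
  {W | ∃ (s : ℕ → K) (δ : WithTop ℝ), (∀ n m : ℕ, n ≠ m → v (s n - s m) = δ) ∧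
    (∀ n, δ ≤ v (β - s n)) ∧ (W : Set (RatFunc K)) = VESet v s}

/-- The Zariski topology on the valuation subrings of a field `L`, generated by the
sets `B(φ) = {W : φ ∈ W}`. -/
def zarTop (L : Type*) [Field L] : TopologicalSpace (ValuationSubring L) :=
  generateFrom {U | ∃ φ : L, U = {W : ValuationSubring L | φ ∈ W}}

/-- The constructible topology on the valuation subrings of a field `L`: the coarsest
topology in which all finite intersections `B(φ₁) ∩ ⋯ ∩ B(φ_k)` are open and closed. -/
def consTop (L : Type*) [Field L] : TopologicalSpace (ValuationSubring L) :=
  generateFrom {U | ∃ T : Finset L, U = {W : ValuationSubring L | ∀ φ ∈ T, φ ∈ W} ∨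
    U = {W : ValuationSubring L | ∀ φ ∈ T, φ ∈ W}ᶜ}

/-- The subspace Zariski topology on a set of valuation subrings. -/
def zarSub {L : Type*} [Field L] (S : Set (ValuationSubring L)) : TopologicalSpace ↥S :=
  (zarTop L).induced Subtype.val

/-- The subspace constructible topology on a set of valuation subrings. -/
def consSub {L : Type*} [Field L] (S : Set (ValuationSubring L)) : TopologicalSpace ↥S :=
  (consTop L).induced Subtype.val

/-- `d` is a metric on `X` inducing the topology `t`. -/
def MetrizedBy {X : Type*} (t : TopologicalSpace X) (d : X → X → ℝ) : Prop :=
  (∀ x y, d x y = d y x) ∧ (∀ x y, d x y = 0 ↔ x = y) ∧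
  (∀ x y z, d x z ≤ d x y + d y z) ∧
  t = generateFrom {U : Set X | ∃ (x : X) (ε : ℝ), 0 < ε ∧ U = {y | d x y < ε}}

/-- The topology `t` is metrizable. -/
def IsMetrizable {X : Type*} (t : TopologicalSpace X) : Prop := ∃ d, MetrizedBy t d

/-- The topology `t` is induced by an ultrametric. -/
def IsUltrametrizable {X : Type*} (t : TopologicalSpace X) : Prop :=
  ∃ d, MetrizedBy t d ∧ ∀ x y z, d x z ≤ max (d x y) (d y z)

/-- `dd` computes the distance `d_δ` on `𝒱(•,δ)`:
`d_δ(V_E, V_F) = lim_n max (d(s_n,t_n) - e^{-δ}) 0`. -/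
def IsDistδ (v : AddValuation K (WithTop ℝ)) (δ : WithTop ℝ)
    (dd : ValuationSubring (RatFunc K) → ValuationSubring (RatFunc K) → ℝ) : Prop :=
  ∀ (W W' : ValuationSubring (RatFunc K)) (s t : ℕ → K),
    IsPC v s → IsBreadth v s δ → (W : Set (RatFunc K)) = VESet v s →
    IsPC v t → IsBreadth v t δ → (W' : Set (RatFunc K)) = VESet v t →
    Tendsto (fun n => max (dK v (s n) (t n) - expNeg δ) 0) atTop (𝓝 (dd W W'))

/-- The `Λ`-upper limit topology on the interval `(-∞, b] ⊆ ℝ ∪ {∞}`, generated by the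
half-open intervals `(α, λ]` with `λ ∈ Λ ∪ {∞}`. -/
def upperTopWT (b : WithTop ℝ) (Λ : Set ℝ) : TopologicalSpace {γ : WithTop ℝ // γ ≤ b} :=
  generateFrom {U | ∃ α lam : WithTop ℝ, α ≤ b ∧
    (lam = ⊤ ∨ ∃ r ∈ Λ, lam = (r : WithTop ℝ)) ∧
    U = {γ : {γ : WithTop ℝ // γ ≤ b} | α < (γ : WithTop ℝ) ∧ (γ : WithTop ℝ) ≤ lam}}

/-- The `Λ`-upper limit topology on `(-∞, +∞] = ℝ ∪ {∞}`. -/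
def upperTopAll (Λ : Set ℝ) : TopologicalSpace (WithTop ℝ) :=
  generateFrom {U | ∃ α lam : WithTop ℝ,
    (lam = ⊤ ∨ ∃ r ∈ Λ, lam = (r : WithTop ℝ)) ∧
    U = {γ : WithTop ℝ | α < γ ∧ γ ≤ lam}}

/-- The `Λ`-upper limit topology on an interval `(a, b]` of `ℝ ∪ {±∞}`. -/
def upperTopE (a b : EReal) (Λ : Set ℝ) : TopologicalSpace {x : EReal // a < x ∧ x ≤ b} :=
  generateFrom {U | ∃ α lam : EReal, (a < α ∧ α ≤ b) ∧
    (lam = ⊤ ∨ ∃ r ∈ Λ, lam = (r : EReal)) ∧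
    U = {x : {x : EReal // a < x ∧ x ≤ b} | α < (x : EReal) ∧ (x : EReal) ≤ lam}}


/-- `𝒲`: the valuation domains of the valuations `w_E : φ ↦ lim_n v(φ(s_n))`, as `E`
ranges over the pseudo-convergent sequences for which `w_E` is a valuation. -/
def WW (v : AddValuation K (WithTop ℝ)) : Set (ValuationSubring (RatFunc K)) :=
  {W | ∃ (s : ℕ → K) (w : AddValuation (RatFunc K) (WithTop ℝ)), IsPC v s ∧
    (∀ φ : RatFunc K, OrdLim (fun n => v (RatFunc.eval (RingHom.id K) (s n) φ)) (w φ)) ∧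
    (W : Set (RatFunc K)) = {φ : RatFunc K | 0 ≤ w φ}}


section Statement7Aux

variable {K : Type*} [Field K]

/-- Substitution `X ↦ c·X` on `K[X]`. -/
def subst (c : K) : K[X] →+* K[X] := eval₂RingHom Polynomial.C (Polynomial.C c * Polynomial.X)

lemma subst_apply (c : K) (p : K[X]) : subst c p = p.comp (Polynomial.C c * Polynomial.X) := rfl

lemma subst_subst (c c' : K) (p : K[X]) : subst c' (subst c p) = subst (c * c') p := by
  simp only [subst_apply, Polynomial.comp_assoc]
  congr 1
  rw [mul_comp, C_comp, X_comp, ← mul_assoc, ← C_mul]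

lemma subst_eval (c x : K) (p : K[X]) : (subst c p).eval x = p.eval (c * x) := by
  simp [subst_apply, eval_comp]

lemma subst_inv_subst (c : K) (hc : c ≠ 0) (p : K[X]) : subst c⁻¹ (subst c p) = p := by
  rw [subst_subst, mul_inv_cancel₀ hc]
  simp [subst_apply]

lemma subst_injective (c : K) (hc : c ≠ 0) : Function.Injective (subst c) :=
  Function.LeftInverse.injective (g := subst c⁻¹) (fun p => subst_inv_subst c hc p)

/-- The endomorphism of `K(X)` induced by `X ↦ c·X`. -/
def tau (c : K) (hc : c ≠ 0) : RatFunc K →+* RatFunc K :=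
  IsFractionRing.lift (g := (algebraMap K[X] (RatFunc K)).comp (subst c))
    ((RatFunc.algebraMap_injective K).comp (subst_injective c hc))

lemma tau_algebraMap (c : K) (hc : c ≠ 0) (p : K[X]) :
    tau c hc (algebraMap K[X] (RatFunc K) p) = algebraMap K[X] (RatFunc K) (subst c p) :=
  IsFractionRing.lift_algebraMap _ _

lemma tau_tau (c c' : K) (hc : c ≠ 0) (hc' : c' ≠ 0) (h : c * c' = 1) (x : RatFunc K) :
    tau c' hc' (tau c hc x) = x := by
  have : (tau c' hc').comp (tau c hc) = RingHom.id (RatFunc K) := by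
    apply IsLocalization.ringHom_ext (nonZeroDivisors K[X])
    apply RingHom.ext; intro p
    simp only [RingHom.coe_comp, Function.comp_apply, tau_algebraMap, RingHom.id_apply,
      subst_apply]
    congr 1
    rw [← subst_apply, ← subst_apply, subst_subst, h, subst_apply, C_1, one_mul, comp_X]
  exact DFunLike.congr_fun this x

lemma ratEval_eq (x : K) (φ : RatFunc K) :
    RatFunc.eval (RingHom.id K) x φ = φ.num.eval x / φ.denom.eval x := rfl

lemma eval_tau (c : K) (hc : c ≠ 0) (x : K) (φ : RatFunc K) :
    RatFunc.eval (RingHom.id K) x (tau c hc φ) = RatFunc.eval (RingHom.id K) (c * x) φ := by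
  set p := φ.num with hp
  set q := φ.denom with hqdef
  have hq : q ≠ 0 := φ.denom_ne_zero
  have hsq : subst c q ≠ 0 := by
    intro h
    exact hq (subst_injective c hc (by simpa using h))
  have hτ : tau c hc φ = algebraMap K[X] (RatFunc K) (subst c p) /
      algebraMap K[X] (RatFunc K) (subst c q) := by
    conv_lhs => rw [← φ.num_div_denom]
    rw [map_div₀, tau_algebraMap, tau_algebraMap]
  have cross : (tau c hc φ).num * subst c q = subst c p * (tau c hc φ).denom :=
    (RatFunc.num_mul_eq_mul_denom_iff hsq).mpr hτ
  have crossx : (tau c hc φ).num.eval x * (subst c q).eval x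
      = (subst c p).eval x * (tau c hc φ).denom.eval x := by
    have := congrArg (Polynomial.eval x) cross
    simpa [Polynomial.eval_mul] using this
  rw [ratEval_eq, ratEval_eq, ← hp, ← hqdef, ← subst_eval c x p, ← subst_eval c x q]
  by_cases h0 : (subst c q).eval x = 0
  · rw [h0, div_zero]
    have hcop : IsCoprime (subst c p) (subst c q) :=
      (φ.isCoprime_num_denom).map (subst c)
    obtain ⟨a, b, hab⟩ := hcop
    have hpx : (subst c p).eval x ≠ 0 := by
      intro hp0
      have := congrArg (Polynomial.eval x) hab
      simp [Polynomial.eval_mul, hp0, h0] at this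
    have hD : (tau c hc φ).denom.eval x = 0 := by
      have h2 := crossx
      rw [h0, mul_zero] at h2
      rcases mul_eq_zero.mp h2.symm with h | h
      · exact absurd h hpx
      · exact h
    rw [hD, div_zero]
  · have hdvd : (tau c hc φ).denom ∣ subst c q := (RatFunc.denom_dvd hsq).mpr ⟨subst c p, hτ⟩
    have hD : (tau c hc φ).denom.eval x ≠ 0 := by
      obtain ⟨r, hr⟩ := hdvd
      intro h
      apply h0
      rw [hr, Polynomial.eval_mul, h, zero_mul]
    rw [div_eq_div_iff hD h0]
    exact crossx

lemma expNeg_top' : expNeg (⊤ : WithTop ℝ) = 0 := rfl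
lemma expNeg_coe' (r : ℝ) : expNeg (r : WithTop ℝ) = Real.exp (-r) := rfl

lemma expNeg_nonneg (a : WithTop ℝ) : 0 ≤ expNeg a := by
  cases a with
  | top => simp [expNeg_top']
  | coe r => exact (Real.exp_pos _).le

lemma expNeg_add (a b : WithTop ℝ) : expNeg (a + b) = expNeg a * expNeg b := by
  cases a with
  | top => simp [expNeg_top', top_add]
  | coe a =>
    cases b with
    | top => simp [expNeg_top', expNeg_coe', add_top]
    | coe b => rw [← WithTop.coe_add, expNeg_coe', expNeg_coe', expNeg_coe', neg_add, Real.exp_add]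

lemma v_ne_top (v : AddValuation K (WithTop ℝ)) {c : K} (hc : c ≠ 0) : v c ≠ ⊤ := by
  intro h
  have h1 : v c + v c⁻¹ = 0 := by rw [← v.map_mul, mul_inv_cancel₀ hc, v.map_one]
  rw [h, top_add] at h1
  simp at h1

lemma dK_mul (v : AddValuation K (WithTop ℝ)) (c x y : K) :
    dK v (c * x) (c * y) = expNeg (v c) * dK v x y := by
  unfold dK
  rw [← mul_sub, v.map_mul, expNeg_add]

lemma wt_cancel (u : ℝ) (x : WithTop ℝ) :
    ((-u : ℝ) : WithTop ℝ) + (((u : ℝ) : WithTop ℝ) + x) = x := by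
  rw [← add_assoc, ← WithTop.coe_add, neg_add_cancel, WithTop.coe_zero, zero_add]

lemma wt_cancel' (u : ℝ) (x : WithTop ℝ) :
    ((u : ℝ) : WithTop ℝ) + (((-u : ℝ) : WithTop ℝ) + x) = x := by
  have := wt_cancel (-u) x
  rwa [neg_neg] at this

lemma ordLim_add (r : ℝ) {f : ℕ → WithTop ℝ} {γ : WithTop ℝ} (h : OrdLim f γ) :
    OrdLim (fun n => (r : WithTop ℝ) + f n) ((r : WithTop ℝ) + γ) := by
  constructor
  · intro a ha
    have ha' : ((-r : ℝ) : WithTop ℝ) + a < γ := by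
      have := WithTop.add_lt_add_left (x := ((-r : ℝ) : WithTop ℝ)) WithTop.coe_ne_top ha
      rwa [wt_cancel r γ] at this
    filter_upwards [h.1 _ ha'] with n hn
    have := WithTop.add_lt_add_left (x := ((r : ℝ) : WithTop ℝ)) WithTop.coe_ne_top hn
    rwa [wt_cancel' r a] at this
  · intro b hb
    have hb' : γ < ((-r : ℝ) : WithTop ℝ) + b := by
      have := WithTop.add_lt_add_left (x := ((-r : ℝ) : WithTop ℝ)) WithTop.coe_ne_top hb
      rwa [wt_cancel r γ] at this
    filter_upwards [h.2 _ hb'] with n hn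
    have := WithTop.add_lt_add_left (x := ((r : ℝ) : WithTop ℝ)) WithTop.coe_ne_top hn
    rwa [wt_cancel' r b] at this

lemma isPC_smul (v : AddValuation K (WithTop ℝ)) {s : ℕ → K} (hs : IsPC v s) {c : K}
    (hc : c ≠ 0) : IsPC v (fun n => c * s n) := by
  intro n
  simp only
  rw [← mul_sub, ← mul_sub, v.map_mul, v.map_mul]
  exact WithTop.add_lt_add_left (v_ne_top v hc) (hs n)

lemma isBreadth_smul (v : AddValuation K (WithTop ℝ)) {s : ℕ → K} {δ δ' : WithTop ℝ}
    (hb : IsBreadth v s δ) {c : K} (hc : c ≠ 0) (hδ : v c + δ = δ') :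
    IsBreadth v (fun n => c * s n) δ' := by
  obtain ⟨r, hr⟩ := WithTop.ne_top_iff_exists.mp (v_ne_top v hc)
  have h3 : IsBreadth v (fun n => c * s n) ((r : WithTop ℝ) + δ) := by
    have h2 := ordLim_add r hb
    unfold IsBreadth
    convert h2 using 2 with n
    rw [← mul_sub, v.map_mul, hr]
  rwa [hr, hδ] at h3

lemma comap_VESet (v : AddValuation K (WithTop ℝ)) (c : K) (hc : c ≠ 0) (s : ℕ → K)
    (W : ValuationSubring (RatFunc K)) (hW : (W : Set (RatFunc K)) = VESet v s) :
    ((W.comap (tau c hc) : ValuationSubring (RatFunc K)) : Set (RatFunc K)) =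
      VESet v (fun n => c * s n) := by
  ext φ
  have h1 : φ ∈ ((W.comap (tau c hc) : ValuationSubring (RatFunc K)) : Set (RatFunc K)) ↔
      tau c hc φ ∈ (W : Set (RatFunc K)) := Iff.rfl
  rw [h1, hW]
  show (∀ᶠ n in atTop, 0 ≤ v (RatFunc.eval (RingHom.id K) (s n) (tau c hc φ))) ↔
    (∀ᶠ n in atTop, 0 ≤ v (RatFunc.eval (RingHom.id K) (c * s n) φ))
  apply eventually_congr
  filter_upwards with n
  rw [eval_tau]

lemma comap_mem_VVδ (v : AddValuation K (WithTop ℝ)) {δ δ' : WithTop ℝ} {c : K} (hc : c ≠ 0)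
    (hδ : v c + δ = δ') {W : ValuationSubring (RatFunc K)} (hW : W ∈ VVδ v δ) :
    W.comap (tau c hc) ∈ VVδ v δ' := by
  obtain ⟨s, hs, hb, hcar⟩ := hW
  exact ⟨fun n => c * s n, isPC_smul v hs hc, isBreadth_smul v hb hc hδ,
    comap_VESet v c hc s W hcar⟩

lemma zar_cont {L : Type*} [Field L] (τ : L →+* L) (S₁ S₂ : Set (ValuationSubring L))
    (f : ↥S₂ → ↥S₁)
    (hf : ∀ W : ↥S₂, (f W : ValuationSubring L) = (W : ValuationSubring L).comap τ) :
    Continuous[zarSub S₂, zarSub S₁] f := by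
  apply continuous_induced_rng.2
  apply continuous_generateFrom_iff.mpr
  rintro U ⟨φ, rfl⟩
  have heq : (Subtype.val ∘ f) ⁻¹' {W : ValuationSubring L | φ ∈ W}
      = Subtype.val ⁻¹' {W : ValuationSubring L | τ φ ∈ W} := by
    ext W
    simp only [Set.mem_preimage, Function.comp_apply, Set.mem_setOf_eq, hf W,
      ValuationSubring.mem_comap]
  rw [heq]
  exact @isOpen_induced _ _ (zarTop L) Subtype.val _
    (isOpen_generateFrom_of_mem ⟨τ φ, rfl⟩)

end Statement7Aux

/-- If `δ₁ - δ₂ = v(c) ∈ Γ_v`, then `Ψ_c : 𝒱(•,δ₂) → 𝒱(•,δ₁)`,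
`V_E ↦ V_{cE}`, is a well-defined bijection scaling the distance by `e^{-v(c)}`; in
particular the two metric spaces are similar and `𝒱(•,δ₂)`, `𝒱(•,δ₁)` are homeomorphic
under the Zariski topology. -/
theorem statement7 (v : AddValuation K (WithTop ℝ)) (hv : IsRankOne v)
    (δ₁ δ₂ : WithTop ℝ) (c : K) (hc0 : c ≠ 0) (hc : v c + δ₂ = δ₁)
    (dd : WithTop ℝ → ValuationSubring (RatFunc K) → ValuationSubring (RatFunc K) → ℝ)
    (hdd : ∀ δ : WithTop ℝ, IsDistδ v δ (dd δ)) :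
    ∃ Ψ : ↥(VVδ v δ₂) → ↥(VVδ v δ₁),
      Function.Bijective Ψ ∧
      (∀ (W : ↥(VVδ v δ₂)) (s : ℕ → K), IsPC v s → IsBreadth v s δ₂ →
        ((W : ValuationSubring (RatFunc K)) : Set (RatFunc K)) = VESet v s →
        ((Ψ W : ValuationSubring (RatFunc K)) : Set (RatFunc K)) =
          VESet v (fun n => c * s n)) ∧
      (∀ W W' : ↥(VVδ v δ₂),
        dd δ₁ (Ψ W : ValuationSubring (RatFunc K)) (Ψ W' : ValuationSubring (RatFunc K)) =
          expNeg (v c) * dd δ₂ (W : ValuationSubring (RatFunc K))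
            (W' : ValuationSubring (RatFunc K))) ∧
      @IsHomeomorph _ _ (zarSub (VVδ v δ₂)) (zarSub (VVδ v δ₁)) Ψ := by
  have hcinv : c⁻¹ ≠ 0 := inv_ne_zero hc0
  set T := tau c hc0 with hT
  set T' := tau c⁻¹ hcinv with hT'
  have hTT' : ∀ x, T (T' x) = x := fun x => tau_tau c⁻¹ c hcinv hc0 (inv_mul_cancel₀ hc0) x
  have hT'T : ∀ x, T' (T x) = x := fun x => tau_tau c c⁻¹ hc0 hcinv (mul_inv_cancel₀ hc0) x
  have hδ' : v c⁻¹ + δ₁ = δ₂ := by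
    rw [← hc, ← add_assoc, ← v.map_mul, inv_mul_cancel₀ hc0, v.map_one, zero_add]
  let Ψ : ↥(VVδ v δ₂) → ↥(VVδ v δ₁) := fun W =>
    ⟨(W : ValuationSubring (RatFunc K)).comap T, comap_mem_VVδ v hc0 hc W.2⟩
  let Φ : ↥(VVδ v δ₁) → ↥(VVδ v δ₂) := fun W =>
    ⟨(W : ValuationSubring (RatFunc K)).comap T', comap_mem_VVδ v hcinv hδ' W.2⟩
  have hΦΨ : Function.LeftInverse Φ Ψ := by
    intro W
    apply Subtype.ext
    show ((W : ValuationSubring (RatFunc K)).comap T).comap T'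
      = (W : ValuationSubring (RatFunc K))
    ext x
    simp only [ValuationSubring.mem_comap, hTT' x]
  have hΨΦ : Function.RightInverse Φ Ψ := by
    intro W
    apply Subtype.ext
    show ((W : ValuationSubring (RatFunc K)).comap T').comap T
      = (W : ValuationSubring (RatFunc K))
    ext x
    simp only [ValuationSubring.mem_comap, hT'T x]
  refine ⟨Ψ, Function.bijective_iff_has_inverse.mpr ⟨Φ, hΦΨ, hΨΦ⟩, ?_, ?_, ?_⟩
  · intro W s hs hb hcar
    exact comap_VESet v c hc0 s _ hcar
  · intro W W'
    obtain ⟨s, hs, hbs, hcs⟩ := W.2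
    obtain ⟨t, ht, hbt, hct⟩ := W'.2
    have h2 := hdd δ₂ W.1 W'.1 s t hs hbs hcs ht hbt hct
    have h1 := hdd δ₁ (Ψ W).1 (Ψ W').1 (fun n => c * s n) (fun n => c * t n)
      (isPC_smul v hs hc0) (isBreadth_smul v hbs hc0 hc) (comap_VESet v c hc0 s _ hcs)
      (isPC_smul v ht hc0) (isBreadth_smul v hbt hc0 hc) (comap_VESet v c hc0 t _ hct)
    have heq : (fun n => max (dK v (c * s n) (c * t n) - expNeg δ₁) 0)
        = fun n => expNeg (v c) * max (dK v (s n) (t n) - expNeg δ₂) 0 := by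
      funext n
      rw [dK_mul, ← hc, expNeg_add, ← mul_sub,
        mul_max_of_nonneg _ _ (expNeg_nonneg (v c)), mul_zero]
    rw [heq] at h1
    exact tendsto_nhds_unique h1 (h2.const_mul _)
  · have contΨ : Continuous[zarSub (VVδ v δ₂), zarSub (VVδ v δ₁)] Ψ :=
      zar_cont T _ _ Ψ (fun W => rfl)
    have contΦ : Continuous[zarSub (VVδ v δ₁), zarSub (VVδ v δ₂)] Φ :=
      zar_cont T' _ _ Φ (fun W => rfl)
    exact @Homeomorph.isHomeomorph _ _ (zarSub (VVδ v δ₂)) (zarSub (VVδ v δ₁))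
      (@Homeomorph.mk _ _ (zarSub (VVδ v δ₂)) (zarSub (VVδ v δ₁)) ⟨Ψ, Φ, hΦΨ, hΨΦ⟩ contΨ contΦ)

end PaperPCZar
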